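/- arXiv:0801.0030 — 2 statements merged into one kernel-verified Lean document; each statement's English description precedes it below -/
import Mathlib

section
/- Let n = p*q with p, q distinct odd primes, and let r be a prime divisor of 2^n + 1 with r ≠ 3. Then p divides r - 1, or q divides r - 1, or n divides r - 1. -/
theorem stmt_2 (p q : ℕ) (hp : p.Prime) (hq : q.Prime) (hpo : Odd p) (hqo : Odd q)
    (hpq : p ≠ q) (r : ℕ) (hr : r.Prime) (hdvd : r ∣ 2 ^ (p * q) + 1) (hr3 : r ≠ 3) :
    p ∣ r - 1 ∨ q ∣ r - 1 ∨ p * q ∣ r - 1 := by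
  -- r is odd (r ≠ 2)
  have hr2 : r ≠ 2 := by
    rintro rfl
    have h2 : 2 ∣ 2 ^ (p * q) := dvd_pow_self 2 (Nat.mul_pos hp.pos hq.pos).ne'
    omega
  haveI : Fact r.Prime := ⟨hr⟩
  -- 2 ≠ 0 in ZMod r
  have h2ne : (2 : ZMod r) ≠ 0 := by
    intro h
    have h2 : (r : ℕ) ∣ 2 := (ZMod.natCast_eq_zero_iff 2 r).mp (by exact_mod_cast h)
    exact hr2 ((Nat.prime_dvd_prime_iff_eq hr Nat.prime_two).mp h2)
  -- 2 ^ (p*q) = -1 in ZMod r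
  have hneg : (2 : ZMod r) ^ (p * q) = -1 := by
    have h0 : ((2 ^ (p * q) + 1 : ℕ) : ZMod r) = 0 :=
      (ZMod.natCast_eq_zero_iff _ r).mpr hdvd
    push_cast at h0
    linear_combination h0
  have hne11 : (-1 : ZMod r) ≠ 1 := by
    intro h
    have : ((2 : ℕ) : ZMod r) = 0 := by push_cast; linear_combination -h
    have h2 := (ZMod.natCast_eq_zero_iff 2 r).mp this
    exact hr2 ((Nat.prime_dvd_prime_iff_eq hr Nat.prime_two).mp h2)
  set d := orderOf (2 : ZMod r) with hd
  have hd2pq : d ∣ 2 * (p * q) := by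
    apply orderOf_dvd_of_pow_eq_one
    rw [pow_mul', hneg]
    ring
  have hdnpq : ¬ d ∣ p * q := by
    intro h
    have := orderOf_dvd_iff_pow_eq_one.mp h
    rw [hneg] at this
    exact hne11 this
  have hdr1 : d ∣ r - 1 := orderOf_dvd_of_pow_eq_one (ZMod.pow_card_sub_one_eq_one h2ne)
  -- not both p∤d and q∤d
  by_cases hpd : p ∣ d
  · by_cases hqd : q ∣ d
    · right; right
      exact (Nat.Coprime.mul_dvd_of_dvd_of_dvd
        ((Nat.coprime_primes hp hq).mpr hpq) hpd hqd).trans hdr1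
    · exact Or.inl (hpd.trans hdr1)
  · by_cases hqd : q ∣ d
    · exact Or.inr (Or.inl (hqd.trans hdr1))
    · exfalso
      have hcp : Nat.Coprime d p := Nat.coprime_comm.mp ((Nat.Prime.coprime_iff_not_dvd hp).mpr hpd)
      have hcq : Nat.Coprime d q := Nat.coprime_comm.mp ((Nat.Prime.coprime_iff_not_dvd hq).mpr hqd)
      have hd2 : d ∣ 2 := (Nat.Coprime.dvd_of_dvd_mul_right (hcp.mul_right hcq)) hd2pq
      have h41 : (2 : ZMod r) ^ 2 = 1 := orderOf_dvd_iff_pow_eq_one.mp hd2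
      have h30 : ((3 : ℕ) : ZMod r) = 0 := by push_cast; linear_combination h41
      have := (ZMod.natCast_eq_zero_iff 3 r).mp h30
      have := (Nat.prime_dvd_prime_iff_eq hr (by norm_num)).mp this
      exact hr3 this
end

section
/- Let n = p*q with p, q distinct odd primes and suppose 2^(p-1) ≢ 1 (mod q) or 2^(q-1) ≢ 1 (mod p). If r is any prime divisor of 2^n + 1 with r ≢ 1 (mod n) and r ≠ 3, then gcd(r - 1, n) ∈ {p, q}; that is, the gcd is a nontrivial prime factor of n. -/
theorem stmt_19 (p q : ℕ) (hp : p.Prime) (hq : q.Prime) (hpo : Odd p) (hqo : Odd q)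
    (hpq : p ≠ q) (h : (2 : ZMod q) ^ (p - 1) ≠ 1 ∨ (2 : ZMod p) ^ (q - 1) ≠ 1)
    (r : ℕ) (hr : r.Prime) (hdvd : r ∣ 2 ^ (p * q) + 1)
    (hr1 : (r : ZMod (p * q)) ≠ 1) (hr3 : r ≠ 3) :
    Nat.gcd (r - 1) (p * q) = p ∨ Nat.gcd (r - 1) (p * q) = q := by
  have hp0 : 0 < p := hp.pos
  have hq0 : 0 < q := hq.pos
  have hr2 : r ≠ 2 := by
    rintro rfl
    have : (2 : ℕ) ∣ 2 ^ (p * q) := dvd_pow_self 2 (by positivity)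
    omega
  have hrodd : 2 < r := lt_of_le_of_ne hr.two_le (Ne.symm hr2)
  haveI : Fact r.Prime := ⟨hr⟩
  haveI : Fact (2 < r) := ⟨hrodd⟩
  -- 2^(pq) = -1 in ZMod r
  have hcast : ((2 ^ (p * q) + 1 : ℕ) : ZMod r) = 0 :=
    (ZMod.natCast_eq_zero_iff _ _).mpr hdvd
  have hneg : (2 : ZMod r) ^ (p * q) = -1 := by
    push_cast at hcast
    linear_combination hcast
  have hneg1 : (-1 : ZMod r) ≠ 1 := ZMod.neg_one_ne_one
  set d := orderOf (2 : ZMod r) with hd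
  have hd2pq : d ∣ 2 * (p * q) := by
    apply orderOf_dvd_of_pow_eq_one
    rw [pow_mul', hneg]
    ring
  have hdnpq : ¬ d ∣ p * q := by
    intro hcon
    have := orderOf_dvd_iff_pow_eq_one.mp hcon
    rw [hneg] at this
    exact hneg1 this
  have h2ne0 : (2 : ZMod r) ≠ 0 := by
    intro hcon
    have : ((2 : ℕ) : ZMod r) = 0 := by push_cast; exact hcon
    have := (ZMod.natCast_eq_zero_iff _ _).mp this
    exact hr2 ((Nat.prime_dvd_prime_iff_eq hr Nat.prime_two).mp this)
  have hdr : d ∣ r - 1 := ZMod.orderOf_dvd_card_sub_one h2ne0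
  -- p ∣ d or q ∣ d
  have hpq_d : p ∣ d ∨ q ∣ d := by
    by_contra hcon
    push_neg at hcon
    have cp : Nat.Coprime p d := (hp.coprime_iff_not_dvd).mpr hcon.1
    have cq : Nat.Coprime q d := (hq.coprime_iff_not_dvd).mpr hcon.2
    have cpq : Nat.Coprime d (p * q) := Nat.Coprime.mul_right cp.symm cq.symm
    have hd2 : d ∣ 2 := (Nat.Coprime.dvd_of_dvd_mul_right cpq) hd2pq
    have : (2 : ZMod r) ^ 2 = 1 := orderOf_dvd_iff_pow_eq_one.mp hd2
    have h3 : ((3 : ℕ) : ZMod r) = 0 := by push_cast; linear_combination this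
    have := (ZMod.natCast_eq_zero_iff _ _).mp h3
    exact hr3 ((Nat.prime_dvd_prime_iff_eq hr Nat.prime_three).mp this)
  -- pq does not divide r - 1
  have hnpq : ¬ (p * q ∣ r - 1) := by
    intro hcon
    apply hr1
    have h1 : ((r - 1 : ℕ) : ZMod (p * q)) = 0 :=
      (ZMod.natCast_eq_zero_iff _ _).mpr hcon
    have : r = (r - 1) + 1 := by omega
    rw [this]
    push_cast [h1]
    ring
  have key : ∀ a b : ℕ, a.Prime → b.Prime → a ∣ r - 1 → ¬ (a * b ∣ r - 1) →
      Nat.gcd (r - 1) (a * b) = a := by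
    intro a b ha hb hadvd hnab
    have hga : a ∣ Nat.gcd (r - 1) (a * b) := Nat.dvd_gcd hadvd ⟨b, rfl⟩
    have hgab : Nat.gcd (r - 1) (a * b) ∣ a * b := Nat.gcd_dvd_right _ _
    obtain ⟨k, hk⟩ := hga
    have hkb : k ∣ b := by
      have : a * k ∣ a * b := hk ▸ hgab
      exact (mul_dvd_mul_iff_left (by exact_mod_cast ha.pos.ne')).mp this
    rcases (hb.eq_one_or_self_of_dvd k hkb) with h1 | h1
    · rw [hk, h1, mul_one]
    · exfalso
      apply hnab
      subst h1; rw [← hk]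
      exact Nat.gcd_dvd_left _ _
  rcases hpq_d with hpd | hqd
  · left
    exact key p q hp hq (hpd.trans hdr) hnpq
  · right
    rw [mul_comm] at hnpq ⊢
    exact key q p hq hp (hqd.trans hdr) hnpq
end
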